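/- Assume D satisfies condition (H1). Let T' > 0, let η : [0,T'] → ℝ^d be continuous with η_0 = 0, let x : [0,T'] → ℝⁿ be continuous with x_0 = 0, let F : ℝ^d ⊗ ℝⁿ → ℝ^d be a nonzero linear map, and let y₀ ∈ cl(D). Let Δ = {0 = t_0 < ⋯ < t_N = T'} be a partition and let (y^Δ, Φ^Δ) be an Euler approximation, i.e. y^Δ_0 = y₀, Φ^Δ(0) = 0, and on each [t_k, t_{k+1}] the pair (y^Δ, Φ^Δ(·) − Φ^Δ(t_k)) solves the Skorohod problem associated with t ↦ y^Δ_{t_k} + (η_t − η_{t_k}) + F(Φ^Δ(t_k) ⊗ (x_t − x_{t_k})). If ‖x‖_{∞,[0,T']} ≤ 1/(10 C_D ‖F‖), then ‖Φ^Δ‖_{[0,T']} ≤ 2 C_D ‖η‖_{∞,[0,T']}, and moreover for all 0 ≤ s ≤ t ≤ T', ‖Φ^Δ‖_{[s,t]} ≤ (5/4) C_D ‖η‖_{∞,[s,t]} + 10 C_D² ‖F‖ ‖η‖_{∞,[0,T']} ‖x‖_{∞,[s,t]}. -/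

import Mathlib

open MeasureTheory Set
open scoped RealInnerProductSpace

noncomputable section

/-- The set of inward unit normal vectors at `x` at radius `r`. -/
def normalVecsAt {d : ℕ} (D : Set (EuclideanSpace ℝ (Fin d)))
    (x : EuclideanSpace ℝ (Fin d)) (r : ℝ) : Set (EuclideanSpace ℝ (Fin d)) :=
  {v | ‖v‖ = 1 ∧ Metric.ball (x - r • v) r ∩ D = ∅}

/-- The set of inward unit normal vectors at `x`. -/
def normalCone {d : ℕ} (D : Set (EuclideanSpace ℝ (Fin d)))
    (x : EuclideanSpace ℝ (Fin d)) : Set (EuclideanSpace ℝ (Fin d)) :=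
  ⋃ r ∈ Set.Ioi (0 : ℝ), normalVecsAt D x r

/-- Condition (A). -/
def CondA {d : ℕ} (D : Set (EuclideanSpace ℝ (Fin d))) (r₀ : ℝ) : Prop :=
  0 < r₀ ∧ ∀ x ∈ frontier D,
    normalCone D x = normalVecsAt D x r₀ ∧ (normalCone D x).Nonempty

/-- Condition (B). -/
def CondB {d : ℕ} (D : Set (EuclideanSpace ℝ (Fin d))) (δ β : ℝ) : Prop :=
  0 < δ ∧ 1 ≤ β ∧ ∀ x ∈ frontier D, ∃ l : EuclideanSpace ℝ (Fin d), ‖l‖ = 1 ∧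
    ∀ y ∈ Metric.ball x δ ∩ frontier D, ∀ v ∈ normalCone D y, 1 / β ≤ ⟪l, v⟫

/-- `‖w‖_{∞,[s,t]}`, the supremum of increments of `w` over `[s,t]`. -/
def supNorm {E : Type*} [NormedAddCommGroup E] (w : ℝ → E) (s t : ℝ) : ℝ :=
  sSup ((fun q : ℝ × ℝ => ‖w q.2 - w q.1‖) '' {q | s ≤ q.1 ∧ q.1 ≤ q.2 ∧ q.2 ≤ t})

/-- `‖φ‖_{[s,t]}`, the total variation of `φ` on `[s,t]`. -/
def totalVar {E : Type*} [NormedAddCommGroup E] (φ : ℝ → E) (s t : ℝ) : ℝ :=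
  (eVariationOn φ (Set.Icc s t)).toReal

/-- A control function on `[0,T]`. -/
structure IsControl (T : ℝ) (ω : ℝ → ℝ → ℝ) : Prop where
  cont : ContinuousOn (fun q : ℝ × ℝ => ω q.1 q.2) {q | 0 ≤ q.1 ∧ q.1 ≤ q.2 ∧ q.2 ≤ T}
  diag : ∀ t, 0 ≤ t → t ≤ T → ω t t = 0
  superadd : ∀ s t u, 0 ≤ s → s ≤ t → t ≤ u → u ≤ T → ω s t + ω t u ≤ ω s u

/-- `(ξ, φ)` is a solution of the Skorohod problem associated with `w` on `[a,b]`. -/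
structure SkorohodSol {d : ℕ} (D : Set (EuclideanSpace ℝ (Fin d))) (a b : ℝ)
    (w ξ φ : ℝ → EuclideanSpace ℝ (Fin d)) : Prop where
  xi_cont : ContinuousOn ξ (Set.Icc a b)
  xi_mem : ∀ t ∈ Set.Icc a b, ξ t ∈ closure D
  phi_cont : ContinuousOn φ (Set.Icc a b)
  phi_bv : BoundedVariationOn φ (Set.Icc a b)
  phi_start : φ a = 0
  eqn : ∀ t ∈ Set.Icc a b, ξ t = w t + φ t
  localTime : ∃ (nv : ℝ → EuclideanSpace ℝ (Fin d)) (μ : Measure ℝ),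
    Measurable nv ∧
    (∀ s ∈ Set.Icc a b, ξ s ∈ frontier D → nv s ∈ normalCone D (ξ s)) ∧
    (∀ u v, a ≤ u → u ≤ v → v ≤ b → μ (Set.Ioc u v) = ENNReal.ofReal (totalVar φ u v)) ∧
    (∀ t ∈ Set.Icc a b,
      φ t = ∫ s in Set.Icc a t, (frontier D).indicator (fun _ => (1 : ℝ)) (ξ s) • nv s ∂μ)

/-- Condition (H1) with constant `C_D`: (A) holds, the Skorohod problem is uniquely
solvable on every subinterval of `[0,T]`, and `‖L(w)‖_{[s,t]} ≤ C_D ‖w‖_{∞,[s,t]}`. -/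
def CondH1 {d : ℕ} (D : Set (EuclideanSpace ℝ (Fin d))) (T C_D : ℝ) : Prop :=
  (∃ r₀, CondA D r₀) ∧ 0 < C_D ∧
  ∀ a b, 0 ≤ a → a ≤ b → b ≤ T →
    ∀ w : ℝ → EuclideanSpace ℝ (Fin d), ContinuousOn w (Set.Icc a b) →
      w a ∈ closure D →
      (∃ ξ φ, SkorohodSol D a b w ξ φ) ∧
      (∀ ξ φ ξ' φ', SkorohodSol D a b w ξ φ → SkorohodSol D a b w ξ' φ' →
        ∀ u ∈ Set.Icc a b, ξ u = ξ' u ∧ φ u = φ' u) ∧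
      (∀ ξ φ, SkorohodSol D a b w ξ φ →
        ∀ s u, a ≤ s → s ≤ u → u ≤ b → totalVar φ s u ≤ C_D * supNorm w s u)

/-- The elementary tensor `a ⊗ b ∈ ℝ^d ⊗ ℝ^n`, realized in `EuclideanSpace ℝ (Fin d × Fin n)`. -/
def outerTensor {d n : ℕ} (a : EuclideanSpace ℝ (Fin d)) (b : EuclideanSpace ℝ (Fin n)) :
    EuclideanSpace ℝ (Fin d × Fin n) :=
  (WithLp.equiv 2 (Fin d × Fin n → ℝ)).symm (fun q => a q.1 * b q.2)

/-- `t` is a partition `0 = t_0 < t_1 < ⋯ < t_N = T` of `[0,T]`. -/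
def IsPartition (T : ℝ) {N : ℕ} (t : Fin (N + 1) → ℝ) : Prop :=
  StrictMono t ∧ t 0 = 0 ∧ t (Fin.last N) = T

/-- `(y, Φ)` is the Euler approximation for the implicit Skorohod equation: on each
`[t_k, t_{k+1}]`, the pair `(y, Φ(·) − Φ(t_k))` solves the Skorohod problem for
`u ↦ y(t_k) + (η_u − η_{t_k}) + F(Φ(t_k) ⊗ (x_u − x_{t_k}))`. -/
def IsImplicitEuler {d n : ℕ} (D : Set (EuclideanSpace ℝ (Fin d)))
    (η : ℝ → EuclideanSpace ℝ (Fin d)) (x : ℝ → EuclideanSpace ℝ (Fin n))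
    (F : EuclideanSpace ℝ (Fin d × Fin n) →L[ℝ] EuclideanSpace ℝ (Fin d))
    {N : ℕ} (t : Fin (N + 1) → ℝ)
    (y Φ : ℝ → EuclideanSpace ℝ (Fin d)) (y₀ : EuclideanSpace ℝ (Fin d)) : Prop :=
  y (t 0) = y₀ ∧ Φ (t 0) = 0 ∧
  ∀ k : Fin N, SkorohodSol D (t k.castSucc) (t k.succ)
    (fun u => y (t k.castSucc) + (η u - η (t k.castSucc)) +
      F (outerTensor (Φ (t k.castSucc)) (x u - x (t k.castSucc))))
    y (fun u => Φ u - Φ (t k.castSucc))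

set_option linter.unusedSectionVars false
namespace SkoAux

variable {d n : ℕ}

lemma outerTensor_apply (a : EuclideanSpace ℝ (Fin d)) (b : EuclideanSpace ℝ (Fin n))
    (q : Fin d × Fin n) : outerTensor a b q = a q.1 * b q.2 := rfl

lemma outerTensor_sub_left (a b : EuclideanSpace ℝ (Fin d)) (c : EuclideanSpace ℝ (Fin n)) :
    outerTensor (a - b) c = outerTensor a c - outerTensor b c := by
  ext q; simp [outerTensor_apply, sub_mul]

lemma outerTensor_add_right (a : EuclideanSpace ℝ (Fin d)) (b c : EuclideanSpace ℝ (Fin n)) :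
    outerTensor a (b + c) = outerTensor a b + outerTensor a c := by
  ext q; simp [outerTensor_apply, mul_add]

lemma outerTensor_sub_right (a : EuclideanSpace ℝ (Fin d)) (b c : EuclideanSpace ℝ (Fin n)) :
    outerTensor a (b - c) = outerTensor a b - outerTensor a c := by
  ext q; simp [outerTensor_apply, mul_sub]

lemma outerTensor_zero_right (a : EuclideanSpace ℝ (Fin d)) :
    outerTensor a (0 : EuclideanSpace ℝ (Fin n)) = 0 := by
  ext q; simp [outerTensor_apply]

lemma outerTensor_zero_left (b : EuclideanSpace ℝ (Fin n)) :
    outerTensor (0 : EuclideanSpace ℝ (Fin d)) b = 0 := by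
  ext q; simp [outerTensor_apply]

lemma norm_outerTensor_le (a : EuclideanSpace ℝ (Fin d)) (b : EuclideanSpace ℝ (Fin n)) :
    ‖outerTensor a b‖ ≤ ‖a‖ * ‖b‖ := by
  rw [EuclideanSpace.norm_eq, EuclideanSpace.norm_eq, EuclideanSpace.norm_eq,
    ← Real.sqrt_mul (by positivity)]
  apply Real.sqrt_le_sqrt
  rw [Finset.sum_mul_sum, Fintype.sum_prod_type]
  apply le_of_eq
  refine Finset.sum_congr rfl fun i _ => Finset.sum_congr rfl fun j _ => ?_
  simp [outerTensor_apply, abs_mul, mul_pow]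

lemma continuous_outerTensor (a : EuclideanSpace ℝ (Fin d)) :
    Continuous (fun b : EuclideanSpace ℝ (Fin n) => outerTensor a b) := by
  let L : EuclideanSpace ℝ (Fin n) →ₗ[ℝ] EuclideanSpace ℝ (Fin d × Fin n) :=
    { toFun := fun b => outerTensor a b
      map_add' := fun b c => outerTensor_add_right a b c
      map_smul' := fun r b => by ext q; simp [outerTensor_apply]; ring }
  exact L.continuous_of_finiteDimensional

section supNormAux

variable {E : Type*} [NormedAddCommGroup E] {w : ℝ → E} {s t a b : ℝ}

lemma supNorm_nonneg' (w : ℝ → E) (s t : ℝ) :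
    0 ≤ supNorm w s t :=
  Real.sSup_nonneg (by rintro x ⟨q, _, rfl⟩; positivity)

lemma supNorm_le' {M : ℝ} (hM : 0 ≤ M)
    (h : ∀ a b, s ≤ a → a ≤ b → b ≤ t → ‖w b - w a‖ ≤ M) :
    supNorm w s t ≤ M :=
  Real.sSup_le (by rintro x ⟨q, ⟨h1, h2, h3⟩, rfl⟩; exact h _ _ h1 h2 h3) hM

lemma supNorm_bddAbove' (hw : ContinuousOn w (Set.Icc s t)) :
    BddAbove ((fun q : ℝ × ℝ => ‖w q.2 - w q.1‖) '' {q | s ≤ q.1 ∧ q.1 ≤ q.2 ∧ q.2 ≤ t}) := by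
  obtain ⟨C, hC⟩ := (isCompact_Icc.image_of_continuousOn hw).isBounded.exists_norm_le
  refine ⟨2 * C, ?_⟩
  rintro z ⟨q, ⟨h1, h2, h3⟩, rfl⟩
  have hq1 := hC _ ⟨q.1, ⟨h1, h2.trans h3⟩, rfl⟩
  have hq2 := hC _ ⟨q.2, ⟨h1.trans h2, h3⟩, rfl⟩
  calc ‖w q.2 - w q.1‖ ≤ ‖w q.2‖ + ‖w q.1‖ := norm_sub_le _ _
  _ ≤ 2 * C := by linarith

lemma norm_sub_le_supNorm'
    (hbdd : BddAbove ((fun q : ℝ × ℝ => ‖w q.2 - w q.1‖) '' {q | s ≤ q.1 ∧ q.1 ≤ q.2 ∧ q.2 ≤ t}))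
    (h1 : s ≤ a) (h2 : a ≤ b) (h3 : b ≤ t) :
    ‖w b - w a‖ ≤ supNorm w s t :=
  le_csSup hbdd ⟨(a, b), ⟨h1, h2, h3⟩, rfl⟩

lemma eVariationOn_sub_const' (φ : ℝ → E) (c : E) (S : Set ℝ) :
    eVariationOn (fun u => φ u - c) S = eVariationOn φ S := by
  unfold eVariationOn
  exact iSup_congr fun p => Finset.sum_congr rfl fun i _ => edist_sub_right _ _ _

lemma cont_glue {f : ℝ → E} {a b c : ℝ}
    (h1 : ContinuousOn f (Icc a b)) (h2 : ContinuousOn f (Icc b c)) :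
    ContinuousOn f (Icc a c) := by
  intro x hx
  have hA : ContinuousWithinAt f (Icc a b) x := by
    by_cases h : x ∈ Icc a b
    · exact h1 x h
    · exact continuousWithinAt_of_notMem_closure (by rwa [isClosed_Icc.closure_eq])
  have hB : ContinuousWithinAt f (Icc b c) x := by
    by_cases h : x ∈ Icc b c
    · exact h2 x h
    · exact continuousWithinAt_of_notMem_closure (by rwa [isClosed_Icc.closure_eq])
  exact (hA.union hB).mono Set.Icc_subset_Icc_union_Icc

lemma eVar_chop (f : ℝ → E) (c : ℕ → ℝ) (hc : Monotone c) (m : ℕ) :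
    eVariationOn f (Icc (c 0) (c m)) =
      ∑ j ∈ Finset.range m, eVariationOn f (Icc (c j) (c (j+1))) := by
  induction m with
  | zero =>
    rw [Finset.range_zero, Finset.sum_empty, Set.Icc_self]
    exact eVariationOn.subsingleton f Set.subsingleton_singleton
  | succ n ih =>
    rw [Finset.sum_range_succ, ← ih]
    have := eVariationOn.Icc_add_Icc f (s := univ) (hc (Nat.zero_le n)) (hc n.le_succ) (mem_univ _)
    simpa using this.symm

end supNormAux

section Abel
variable {E F G : Type*} [AddCommGroup E] [AddCommGroup F] [AddCommGroup G]
    (p : E → F → G) (hpl : ∀ a b c, p (a - b) c = p a c - p b c)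
    (hpr : ∀ a b c, p a (b + c) = p a b + p a c) (hp0 : ∀ a, p a 0 = 0)
    (B : ℕ → E) (A : ℕ → F)

include hpl in
lemma sum_p (C : F) : ∀ N : ℕ,
    ∑ j ∈ Finset.range N, p (B (j+1) - B j) C = p (B N) C - p (B 0) C := by
  intro N
  induction N with
  | zero => simp
  | succ n ih => rw [Finset.sum_range_succ, ih, hpl]; abel

include hpl hpr hp0 in
lemma abel_sum : ∀ N : ℕ, ∑ j ∈ Finset.range N, p (B j) (A (j+1) - A j)
      = p (B 0) (A N - A 0) + ∑ j ∈ Finset.range N, p (B (j+1) - B j) (A N - A (j+1)) := by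
  intro N
  induction N with
  | zero => simp [hp0]
  | succ n ih =>
    rw [Finset.sum_range_succ, ih, Finset.sum_range_succ (n := n)
      (f := fun j => p (B (j+1) - B j) (A (n+1) - A (j+1)))]
    have key : ∀ a : E, ∀ j : ℕ, p a (A (n+1) - A (j+1))
        = p a (A n - A (j+1)) + p a (A (n+1) - A n) := by
      intro a j; rw [← hpr]; congr 1; abel
    rw [Finset.sum_congr rfl (fun j _ => key _ j), Finset.sum_add_distrib,
      sum_p p hpl B (A (n+1) - A n) n]
    have key0 : p (B 0) (A (n+1) - A 0) = p (B 0) (A n - A 0) + p (B 0) (A (n+1) - A n) := by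
      rw [← hpr]; congr 1; abel
    rw [key0, sub_self (A (n+1)), hp0]
    abel
end Abel

end SkoAux

set_option maxHeartbeats 2000000 in
/-- from the proof of Lemma 4.2 (2): variation estimates for the
Euler approximation of the implicit Skorohod equation on a small time interval. -/
theorem implicit_euler_estimate {d n : ℕ}
    (D : Set (EuclideanSpace ℝ (Fin d))) (T' C_D : ℝ) (hT' : 0 < T')
    (hH1 : CondH1 D T' C_D)
    (η : ℝ → EuclideanSpace ℝ (Fin d)) (hη : ContinuousOn η (Set.Icc 0 T')) (hη0 : η 0 = 0)
    (x : ℝ → EuclideanSpace ℝ (Fin n)) (hxc : ContinuousOn x (Set.Icc 0 T')) (hx0 : x 0 = 0)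
    (F : EuclideanSpace ℝ (Fin d × Fin n) →L[ℝ] EuclideanSpace ℝ (Fin d)) (hF : F ≠ 0)
    (y₀ : EuclideanSpace ℝ (Fin d)) (hy₀ : y₀ ∈ closure D)
    (N : ℕ) (t : Fin (N + 1) → ℝ) (ht : IsPartition T' t)
    (y Φ : ℝ → EuclideanSpace ℝ (Fin d)) (hEuler : IsImplicitEuler D η x F t y Φ y₀)
    (hsmall : supNorm x 0 T' ≤ 1 / (10 * C_D * ‖F‖)) :
    totalVar Φ 0 T' ≤ 2 * C_D * supNorm η 0 T' ∧
    ∀ s u, 0 ≤ s → s ≤ u → u ≤ T' →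
      totalVar Φ s u ≤
        5 / 4 * C_D * supNorm η s u +
          10 * C_D ^ 2 * ‖F‖ * supNorm η 0 T' * supNorm x s u := by
  classical
  obtain ⟨hA, hCD, hmain⟩ := hH1
  obtain ⟨hy0, hΦt0, hSol⟩ := hEuler
  obtain ⟨htmono, ht0, htlast⟩ := ht
  have hN : 0 < N := by
    rcases Nat.eq_zero_or_pos N with h | h
    · subst h
      have : t 0 = T' := htlast
      rw [ht0] at this
      linarith
    · exact h
  have ht_nonneg : ∀ k : Fin (N+1), 0 ≤ t k := fun k => ht0 ▸ htmono.monotone (Fin.zero_le k)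
  have ht_leT : ∀ k : Fin (N+1), t k ≤ T' := fun k => htlast ▸ htmono.monotone (Fin.le_last k)
  have htkk : ∀ k : Fin N, t k.castSucc ≤ t k.succ :=
    fun k => (htmono (Fin.castSucc_lt_succ (i := k))).le
  -- ℕ-indexed partition points
  set tN : ℕ → ℝ := fun j => t ⟨min j N, Nat.lt_succ_of_le (min_le_right _ _)⟩ with htNdef
  have htN_mono : Monotone tN := by
    intro i j hij
    exact htmono.monotone (by simp only [Fin.mk_le_mk]; omega)
  have htN0 : tN 0 = 0 := by
    rw [htNdef]
    simp only [Nat.zero_min]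
    rw [show (⟨0, Nat.lt_succ_of_le (Nat.zero_le N)⟩ : Fin (N+1)) = 0 from rfl]
    exact ht0
  have htNlast : tN N = T' := by
    rw [htNdef]
    simp only [Nat.min_self]
    rw [show (⟨N, Nat.lt_succ_of_le le_rfl⟩ : Fin (N+1)) = Fin.last N from rfl]
    exact htlast
  have htN_cast : ∀ k : Fin N, tN k.val = t k.castSucc := by
    intro k
    exact congrArg t (Fin.ext (by simp [Nat.min_eq_left k.2.le]))
  have htN_succ : ∀ k : Fin N, tN (k.val + 1) = t k.succ := by
    intro k
    exact congrArg t (Fin.ext (by simp [Nat.min_eq_left k.2]))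
  have htN_nonneg : ∀ j, 0 ≤ tN j := fun j => htN0 ▸ htN_mono (Nat.zero_le j)
  have htN_leT : ∀ j, tN j ≤ T' := fun j => htlast ▸ htmono.monotone (Fin.le_last _)
  have hΦ0 : Φ 0 = 0 := by rw [← ht0]; exact hΦt0
  -- the global driving path
  set S : ℝ → EuclideanSpace ℝ (Fin d × Fin n) := fun v =>
    ∑ j ∈ Finset.range N, outerTensor (Φ (tN j)) (x (min v (tN (j+1))) - x (min v (tN j)))
    with hSdef
  set wt : ℝ → EuclideanSpace ℝ (Fin d) := fun v => y₀ + η v + F (S v) with hwtdef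
  have hS0 : S 0 = 0 := by
    rw [hSdef]
    refine Finset.sum_eq_zero fun j _ => ?_
    rw [min_eq_left (htN_nonneg _), min_eq_left (htN_nonneg _), sub_self,
      SkoAux.outerTensor_zero_right]
  have hwt0 : wt 0 = y₀ := by
    rw [hwtdef]; simp only [hS0, hη0, map_zero, add_zero]
  -- local increments of S
  have hSloc : ∀ k : Fin N, ∀ v, t k.castSucc ≤ v → v ≤ t k.succ →
      S v = S (t k.castSucc) + outerTensor (Φ (t k.castSucc)) (x v - x (t k.castSucc)) := by
    intro k v hv1 hv2
    have key : S v - S (t k.castSucc) = outerTensor (Φ (t k.castSucc)) (x v - x (t k.castSucc)) := by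
      rw [hSdef]
      simp only
      rw [← Finset.sum_sub_distrib]
      rw [Finset.sum_eq_single_of_mem k.val (Finset.mem_range.2 k.2)]
      · rw [htN_cast k, htN_succ k, min_eq_left hv2, min_eq_right hv1,
          min_eq_left (htkk k), min_self, sub_self, SkoAux.outerTensor_zero_right, sub_zero]
      · intro j hj hjk
        rcases lt_or_gt_of_ne hjk with hlt | hgt
        · -- j < k.val : interval j is to the left
          have h1 : tN (j+1) ≤ t k.castSucc := by
            rw [← htN_cast k]; exact htN_mono (by omega)
          have h2 : tN j ≤ t k.castSucc := (htN_mono (Nat.le_succ j)).trans h1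
          rw [min_eq_right (h1.trans hv1), min_eq_right (h2.trans hv1),
            min_eq_right h1, min_eq_right h2, sub_self]
        · -- j > k.val : interval j is to the right
          have h1 : t k.succ ≤ tN j := by
            rw [← htN_succ k]; exact htN_mono (by omega)
          have h2 : t k.succ ≤ tN (j+1) := h1.trans (htN_mono (Nat.le_succ j))
          rw [min_eq_left (hv2.trans h2), min_eq_left (hv2.trans h1),
            min_eq_left ((htkk k).trans h2), min_eq_left ((htkk k).trans h1)]
          simp [SkoAux.outerTensor_zero_right]
    rw [← key]; abel
  -- continuity of S and wt
  have hxmin : ∀ c : ℝ, 0 ≤ c → ContinuousOn (fun v => x (min v c)) (Icc 0 T') := by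
    intro c hc
    refine hxc.comp ((continuous_id.min continuous_const).continuousOn) ?_
    intro v hv
    exact ⟨le_min hv.1 hc, (min_le_left _ _).trans hv.2⟩
  have hScont : ContinuousOn S (Icc 0 T') := by
    rw [hSdef]
    apply continuousOn_finset_sum
    intro j _
    exact (SkoAux.continuous_outerTensor _).comp_continuousOn
      ((hxmin _ (htN_nonneg _)).sub (hxmin _ (htN_nonneg _)))
  have hwtcont : ContinuousOn wt (Icc 0 T') := by
    rw [hwtdef]
    exact (continuousOn_const.add hη).add (F.continuous.comp_continuousOn hScont)
  -- gluing continuity over the partition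
  have glue : ∀ g : ℝ → EuclideanSpace ℝ (Fin d),
      (∀ k : Fin N, ContinuousOn g (Icc (t k.castSucc) (t k.succ))) →
      ContinuousOn g (Icc 0 T') := by
    intro g hg
    have key : ∀ m : ℕ, m ≤ N → ContinuousOn g (Icc 0 (tN m)) := by
      intro m
      induction m with
      | zero => intro _; rw [htN0, Icc_self]; exact continuousOn_singleton g 0
      | succ mm ih =>
        intro hm
        have h1 := ih (Nat.le_of_succ_le hm)
        have h2 := hg ⟨mm, hm⟩
        rw [← htN_cast ⟨mm, hm⟩, ← htN_succ ⟨mm, hm⟩] at h2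
        exact SkoAux.cont_glue h1 h2
    have := key N le_rfl
    rwa [htNlast] at this
  have hycont : ContinuousOn y (Icc 0 T') := glue y fun k => (hSol k).xi_cont
  have hΦcontk : ∀ k : Fin N, ContinuousOn Φ (Icc (t k.castSucc) (t k.succ)) := by
    intro k
    have h2 := (hSol k).phi_cont.add (continuousOn_const (c := Φ (t k.castSucc)))
    simpa [Pi.add_def] using h2
  have hΦcont : ContinuousOn Φ (Icc 0 T') := glue Φ hΦcontk
  -- covering lemmas
  have hcover : ∀ v, 0 ≤ v → v ≤ T' → ∃ k : Fin N, t k.castSucc ≤ v ∧ v ≤ t k.succ := by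
    intro v hv0 hvT
    have key : ∀ m : ℕ, m ≤ N → v ≤ tN m → ∃ k : Fin N, t k.castSucc ≤ v ∧ v ≤ t k.succ := by
      intro m
      induction m with
      | zero =>
        intro _ hv
        refine ⟨⟨0, hN⟩, ?_, ?_⟩
        · rw [← htN_cast ⟨0, hN⟩]
          simpa [htN0] using hv0
        · exact le_trans (by rw [htN0] at hv; linarith) (ht_nonneg _)
      | succ mm ih =>
        intro hm hv
        by_cases hvm : v ≤ tN mm
        · exact ih (Nat.le_of_succ_le hm) hvm
        · push_neg at hvm
          refine ⟨⟨mm, hm⟩, ?_, ?_⟩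
          · rw [← htN_cast ⟨mm, hm⟩]; exact hvm.le
          · rw [← htN_succ ⟨mm, hm⟩]; exact hv
    exact key N le_rfl (by rwa [htNlast])
  have hcoverIoc : ∀ v, 0 < v → v ≤ T' → ∃ k : Fin N, t k.castSucc < v ∧ v ≤ t k.succ := by
    intro v hv0 hvT
    have key : ∀ m : ℕ, m ≤ N → v ≤ tN m → ∃ k : Fin N, t k.castSucc < v ∧ v ≤ t k.succ := by
      intro m
      induction m with
      | zero =>
        intro _ hv
        rw [htN0] at hv
        linarith
      | succ mm ih =>
        intro hm hv
        by_cases hvm : v ≤ tN mm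
        · exact ih (Nat.le_of_succ_le hm) hvm
        · push_neg at hvm
          refine ⟨⟨mm, hm⟩, ?_, ?_⟩
          · rw [← htN_cast ⟨mm, hm⟩]; exact hvm
          · rw [← htN_succ ⟨mm, hm⟩]; exact hv
    exact key N le_rfl (by rwa [htNlast])
  -- the equation y = wt + Φ on [0, T']
  have hstep : ∀ k : Fin N, y (t k.castSucc) = wt (t k.castSucc) + Φ (t k.castSucc) →
      ∀ v, t k.castSucc ≤ v → v ≤ t k.succ → y v = wt v + Φ v := by
    intro k hbase v hv1 hv2
    have heq := (hSol k).eqn v ⟨hv1, hv2⟩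
    have hwtv : wt v = y₀ + η v + F (S (t k.castSucc))
        + F (outerTensor (Φ (t k.castSucc)) (x v - x (t k.castSucc))) := by
      rw [hwtdef]
      simp only
      rw [hSloc k v hv1 hv2, map_add]
      abel
    have hbase' : y (t k.castSucc) = y₀ + η (t k.castSucc) + F (S (t k.castSucc))
        + Φ (t k.castSucc) := by
      rw [hbase, hwtdef]
    rw [heq, hbase', hwtv]
    abel
  have hpart_eqn : ∀ m : ℕ, m ≤ N → y (tN m) = wt (tN m) + Φ (tN m) := by
    intro m
    induction m with
    | zero =>
      intro _
      rw [htN0, hwt0, hΦ0, add_zero, ← ht0, hy0]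
    | succ mm ih =>
      intro hm
      have hb := ih (Nat.le_of_succ_le hm)
      rw [htN_cast ⟨mm, hm⟩] at hb
      rw [htN_succ ⟨mm, hm⟩]
      exact hstep ⟨mm, hm⟩ hb _ (htkk _) le_rfl
  have heqn : ∀ v ∈ Icc (0:ℝ) T', y v = wt v + Φ v := by
    intro v hv
    obtain ⟨k, h1, h2⟩ := hcover v hv.1 hv.2
    have hb := hpart_eqn k.val (le_of_lt k.2)
    rw [htN_cast k] at hb
    exact hstep k hb v h1 h2
  -- variation finiteness
  have hbvk : ∀ k : Fin N, eVariationOn Φ (Icc (t k.castSucc) (t k.succ)) ≠ ⊤ := by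
    intro k
    have h := (hSol k).phi_bv
    unfold BoundedVariationOn at h
    rwa [SkoAux.eVariationOn_sub_const'] at h
  have hVfin : eVariationOn Φ (Icc 0 T') ≠ ⊤ := by
    rw [← htN0, ← htNlast, SkoAux.eVar_chop Φ tN htN_mono N]
    rw [← lt_top_iff_ne_top]
    apply ENNReal.sum_lt_top.2
    intro j hj
    have hjN : j < N := Finset.mem_range.1 hj
    rw [htN_cast ⟨j, hjN⟩, htN_succ ⟨j, hjN⟩, lt_top_iff_ne_top]
    exact hbvk ⟨j, hjN⟩
  have hsubfin : ∀ a b : ℝ, 0 ≤ a → b ≤ T' → eVariationOn Φ (Icc a b) ≠ ⊤ := by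
    intro a b ha hb
    by_cases hab : a ≤ b
    · exact ne_top_of_le_ne_top hVfin (eVariationOn.mono Φ (Icc_subset_Icc ha hb))
    · rw [Set.Icc_eq_empty hab]
      rw [show eVariationOn Φ ∅ = 0 from eVariationOn.subsingleton Φ subsingleton_empty]
      exact ENNReal.zero_ne_top
  -- extract per-interval local time data
  choose nvk μk hnvmeas hcone hμspec hintk using fun k : Fin N => (hSol k).localTime
  have hμIoc : ∀ k : Fin N, ∀ u v : ℝ, t k.castSucc ≤ u → u ≤ v → v ≤ t k.succ →
      μk k (Ioc u v) = eVariationOn Φ (Icc u v) := by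
    intro k u v h1 h2 h3
    rw [hμspec k u v h1 h2 h3]
    unfold totalVar
    rw [SkoAux.eVariationOn_sub_const']
    exact ENNReal.ofReal_toReal
      (hsubfin u v ((ht_nonneg _).trans h1) (h3.trans (ht_leT _)))
  -- glued normal vector field
  set nv : ℝ → EuclideanSpace ℝ (Fin d) := fun s =>
    if s = 0 then nvk ⟨0, hN⟩ 0
    else ∑ k : Fin N, (Ioc (t k.castSucc) (t k.succ)).indicator (nvk k) s with hnvdef
  have hfrmeas : MeasurableSet (frontier D) := isClosed_frontier.measurableSet
  have hnvmeas' : Measurable nv := by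
    rw [hnvdef]
    refine Measurable.ite (measurableSet_eq) measurable_const ?_
    exact Finset.measurable_sum _ fun k _ => (hnvmeas k).indicator measurableSet_Ioc
  have hnv_on : ∀ k : Fin N, ∀ s, t k.castSucc < s → s ≤ t k.succ → nv s = nvk k s := by
    intro k s h1 h2
    have hs0 : s ≠ 0 := ne_of_gt (lt_of_le_of_lt (ht_nonneg _) h1)
    rw [hnvdef]
    simp only [if_neg hs0]
    rw [Finset.sum_eq_single_of_mem k (Finset.mem_univ k)]
    · rw [Set.indicator_of_mem (show s ∈ Ioc (t k.castSucc) (t k.succ) from ⟨h1, h2⟩) (nvk k)]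
    · intro j _ hjk
      apply Set.indicator_of_notMem
      intro hmem
      rcases lt_or_gt_of_ne (fun h : j = k => hjk h) with hlt | hgt
      · have : t j.succ ≤ t k.castSucc :=
          htmono.monotone (by simp [Fin.le_def]; omega)
        exact absurd hmem.2 (by linarith)
      · have : t k.succ ≤ t j.castSucc :=
          htmono.monotone (by simp [Fin.le_def]; omega)
        exact absurd hmem.1 (by linarith)
  -- the glued integrand and per-interval integrands
  set f : ℝ → EuclideanSpace ℝ (Fin d) := fun s =>
    (frontier D).indicator (fun _ => (1:ℝ)) (y s) • nv s with hfdef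
  set fk : Fin N → ℝ → EuclideanSpace ℝ (Fin d) := fun k s =>
    (frontier D).indicator (fun _ => (1:ℝ)) (y s) • nvk k s with hfkdef
  have hfk_bnd : ∀ k : Fin N, ∀ s ∈ Icc (t k.castSucc) (t k.succ), ‖fk k s‖ ≤ 1 := by
    intro k s hs
    rw [hfkdef]
    simp only
    by_cases hfr : y s ∈ frontier D
    · rw [Set.indicator_of_mem hfr, one_smul]
      have := hcone k s hs hfr
      simp only [normalCone, Set.mem_iUnion] at this
      obtain ⟨r, hr, hmem⟩ := this
      exact le_of_eq hmem.1
    · rw [Set.indicator_of_notMem hfr, zero_smul, norm_zero]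
      exact zero_le_one
  have hf_eq : ∀ k : Fin N, ∀ s ∈ Ioc (t k.castSucc) (t k.succ), f s = fk k s := by
    intro k s hs
    rw [hfdef, hfkdef]
    simp only
    rw [hnv_on k s hs.1 hs.2]
  -- integrability on half-open intervals
  have hintIoc : ∀ k : Fin N, ∀ a b : ℝ, t k.castSucc ≤ a → b ≤ t k.succ →
      IntegrableOn (fk k) (Ioc a b) (μk k) := by
    intro k a b ha hb
    by_cases hab : a ≤ b
    · constructor
      · have hsub : Ioc a b ⊆ Icc (t k.castSucc) (t k.succ) :=
          fun z hz => ⟨ha.trans hz.1.le, hz.2.trans hb⟩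
        have hy : AEMeasurable y ((μk k).restrict (Ioc a b)) :=
          ((hSol k).xi_cont.mono hsub).aemeasurable measurableSet_Ioc
        have hm : AEMeasurable (fun s => (frontier D).indicator (fun _ => (1:ℝ)) (y s) • nvk k s)
            ((μk k).restrict (Ioc a b)) :=
          (((measurable_const (a := (1:ℝ))).indicator hfrmeas).comp_aemeasurable hy).smul
            (hnvmeas k).aemeasurable
        exact hm.aestronglyMeasurable
      · apply HasFiniteIntegral.restrict_of_bounded (C := 1)
        · rw [hμIoc k a b ha hab hb, lt_top_iff_ne_top]
          exact hsubfin a b ((ht_nonneg _).trans ha) (hb.trans (ht_leT _))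
        · filter_upwards [ae_restrict_mem measurableSet_Ioc] with s hs
          exact hfk_bnd k s ⟨ha.trans hs.1.le, hs.2.trans hb⟩
    · rw [Set.Ioc_eq_empty (fun h => hab h.le)]
      exact integrableOn_empty
  -- Step 1: per-interval integral over Ioc
  have hIoc : ∀ k : Fin N, ∀ v, t k.castSucc ≤ v → v ≤ t k.succ →
      ∫ s in Ioc (t k.castSucc) v, fk k s ∂(μk k) = Φ v - Φ (t k.castSucc) := by
    intro k v hv1 hv2
    have hIcc : ∀ z, t k.castSucc ≤ z → z ≤ t k.succ →
        ∫ s in Icc (t k.castSucc) z, fk k s ∂(μk k) = Φ z - Φ (t k.castSucc) := by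
      intro z h1 h2
      exact (hintk k z ⟨h1, h2⟩).symm
    have hsplit : Icc (t k.castSucc) v = {t k.castSucc} ∪ Ioc (t k.castSucc) v := by
      rw [← Set.Ioc_insert_left hv1, Set.insert_eq]
    by_cases hInt : IntegrableOn (fk k) (Icc (t k.castSucc) v) (μk k)
    · have hdisj : Disjoint {t k.castSucc} (Ioc (t k.castSucc) v) := by
        simp [Set.disjoint_singleton_left]
      have hu := setIntegral_union hdisj measurableSet_Ioc
        (hInt.mono_set (by rw [hsplit]; exact subset_union_left))
        (hInt.mono_set (by rw [hsplit]; exact subset_union_right))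
      rw [← hsplit] at hu
      have hpoint : ∫ s in {t k.castSucc}, fk k s ∂(μk k) = 0 := by
        have h := hIcc (t k.castSucc) le_rfl (htkk k)
        rwa [Icc_self, sub_self] at h
      rw [hIcc v hv1 hv2, hpoint, zero_add] at hu
      exact hu.symm
    · have hIooInt : IntegrableOn (fk k) (Ioc (t k.castSucc) v) (μk k) :=
        hintIoc k _ _ le_rfl hv2
      have hsing : ¬ IntegrableOn (fk k) {t k.castSucc} (μk k) := by
        intro h
        apply hInt
        rw [hsplit]
        exact h.union hIooInt
      have hconst : ∀ z, t k.castSucc ≤ z → z ≤ v → Φ z = Φ (t k.castSucc) := by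
        intro z h1 h2
        have hni : ¬ IntegrableOn (fk k) (Icc (t k.castSucc) z) (μk k) :=
          fun h => hsing (h.mono_set (Set.singleton_subset_iff.2 (Set.left_mem_Icc.2 h1)))
        have h := hIcc z h1 (h2.trans hv2)
        rw [MeasureTheory.integral_undef hni] at h
        exact (sub_eq_zero.1 h.symm)
      have hvar0 : eVariationOn Φ (Icc (t k.castSucc) v) = 0 := by
        apply (eVariationOn.eq_zero_iff Φ).2
        intro p hp q hq
        rw [hconst p hp.1 hp.2, hconst q hq.1 hq.2, edist_self]
      have hmeas0 : μk k (Ioc (t k.castSucc) v) = 0 := by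
        rw [hμIoc k _ v le_rfl hv1 hv2, hvar0]
      rw [Measure.restrict_eq_zero.2 hmeas0, integral_zero_measure,
        hconst v hv1 le_rfl, sub_self]
  -- glued measure
  set μ : Measure ℝ := ∑ k : Fin N, (μk k).restrict (Ioc (t k.castSucc) (t k.succ)) with hμdef
  have hμapply : ∀ A : Set ℝ, MeasurableSet A →
      μ A = ∑ k : Fin N, μk k (A ∩ Ioc (t k.castSucc) (t k.succ)) := by
    intro A hA
    rw [hμdef, Measure.finset_sum_apply]
    exact Finset.sum_congr rfl fun k _ => Measure.restrict_apply hA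
  -- measure of Ioc intervals: chopping
  have hμspec' : ∀ u v : ℝ, 0 ≤ u → u ≤ v → v ≤ T' →
      μ (Ioc u v) = ENNReal.ofReal (totalVar Φ u v) := by
    intro u v h0 huv hvT
    rw [hμapply _ measurableSet_Ioc]
    have hpieces : ∀ k : Fin N, μk k (Ioc u v ∩ Ioc (t k.castSucc) (t k.succ))
        = eVariationOn Φ (Icc ((u ⊔ tN k.val) ⊓ v) ((u ⊔ tN (k.val+1)) ⊓ v)) := by
      intro k
      rw [Set.Ioc_inter_Ioc, htN_cast k, htN_succ k]
      set a := t k.castSucc with hadef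
      set b := t k.succ with hbdef
      have hab : a ≤ b := htkk k
      by_cases hcase : u ⊔ a ≤ v ⊓ b
      · rw [hμIoc k (u ⊔ a) (v ⊓ b) le_sup_right hcase inf_le_right]
        have e1 : (u ⊔ a) ⊓ v = u ⊔ a := inf_eq_left.2 (hcase.trans inf_le_left)
        have hub : u ≤ b := le_trans (le_sup_left.trans hcase) inf_le_right
        have e2 : (u ⊔ b) ⊓ v = v ⊓ b := by rw [sup_eq_right.2 hub, inf_comm]
        rw [e1, e2]
      · rw [Set.Ioc_eq_empty (fun h => hcase h.le), measure_empty]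
        push_neg at hcase
        have hcc : (u ⊔ a) ⊓ v = (u ⊔ b) ⊓ v := by
          rcases le_or_gt b u with hbu | hub
          · rw [sup_eq_left.2 (hab.trans hbu), sup_eq_left.2 hbu]
          · have hva : v < a := by
              rcases le_or_gt a u with hau | hua
              · exfalso
                rw [sup_eq_left.2 hau] at hcase
                exact absurd (le_inf huv hub.le) (not_le.2 hcase)
              · rw [sup_eq_right.2 hua.le] at hcase
                by_contra hav
                push_neg at hav
                exact absurd (le_inf hav hab) (not_le.2 hcase)
            rw [inf_eq_right.2 (hva.le.trans le_sup_right),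
              inf_eq_right.2 ((hva.le.trans hab).trans le_sup_right)]
        rw [← hcc, Icc_self]
        exact (eVariationOn.subsingleton Φ Set.subsingleton_singleton).symm
    rw [Finset.sum_congr rfl fun k _ => hpieces k]
    have hc : Monotone (fun j : ℕ => (u ⊔ tN j) ⊓ v) := by
      intro i j hij
      exact inf_le_inf_right v (sup_le_sup_left (htN_mono hij) u)
    have hchop := SkoAux.eVar_chop Φ _ hc N
    rw [htN0, htNlast, sup_of_le_left h0, sup_of_le_right (huv.trans hvT),
      inf_of_le_left huv, inf_of_le_right hvT] at hchop
    rw [Fin.sum_univ_eq_sum_range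
      (fun j => eVariationOn Φ (Icc ((u ⊔ tN j) ⊓ v) ((u ⊔ tN (j+1)) ⊓ v))) N, ← hchop]
    unfold totalVar
    exact (ENNReal.ofReal_toReal (hsubfin u v h0 hvT)).symm
  -- global integral identity
  have hglobala : ∀ τ, 0 ≤ τ → τ ≤ T' → Φ τ = ∫ s in Icc 0 τ, f s ∂μ := by
    intro τ h0 hT
    have hIcap : ∀ a b : ℝ, 0 ≤ a → Icc 0 τ ∩ Ioc a b = Ioc a (min τ b) := by
      intro a b ha
      ext z
      simp only [Set.mem_inter_iff, Set.mem_Icc, Set.mem_Ioc, le_min_iff]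
      constructor
      · rintro ⟨⟨_, hzτ⟩, haz, hzb⟩
        exact ⟨haz, hzτ, hzb⟩
      · rintro ⟨haz, hzτ, hzb⟩
        exact ⟨⟨ha.trans haz.le, hzτ⟩, haz, hzb⟩
    have hrestr : μ.restrict (Icc 0 τ) =
        ∑ k : Fin N, (μk k).restrict (Ioc (t k.castSucc) (min τ (t k.succ))) := by
      ext A hA
      rw [Measure.restrict_apply hA, hμapply _ (hA.inter measurableSet_Icc),
        Measure.finset_sum_apply]
      refine Finset.sum_congr rfl fun k _ => ?_
      rw [Measure.restrict_apply hA]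
      congr 1
      rw [Set.inter_assoc, hIcap _ _ (ht_nonneg _)]
    have hIocsub : ∀ k : Fin N, Ioc (t k.castSucc) (min τ (t k.succ)) ⊆
        Ioc (t k.castSucc) (t k.succ) :=
      fun k => Set.Ioc_subset_Ioc le_rfl (min_le_right _ _)
    have hint' : ∀ k ∈ Finset.univ (α := Fin N), Integrable f
        ((μk k).restrict (Ioc (t k.castSucc) (min τ (t k.succ)))) := by
      intro k _
      have heq : EqOn f (fk k) (Ioc (t k.castSucc) (min τ (t k.succ))) :=
        fun z hz => hf_eq k z (hIocsub k hz)
      exact (IntegrableOn.congr_fun (hintIoc k _ _ le_rfl (min_le_right _ _))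
        heq.symm measurableSet_Ioc)
    have hdecomp : ∫ s in Icc 0 τ, f s ∂μ =
        ∑ k : Fin N, ∫ s in Ioc (t k.castSucc) (min τ (t k.succ)), f s ∂(μk k) := by
      rw [show (∫ s in Icc 0 τ, f s ∂μ) = ∫ s, f s ∂(μ.restrict (Icc 0 τ)) from rfl, hrestr]
      exact integral_finset_sum_measure hint'
    rw [hdecomp]
    have hterm : ∀ k : Fin N, ∫ s in Ioc (t k.castSucc) (min τ (t k.succ)), f s ∂(μk k)
        = Φ (min τ (t k.succ)) - Φ (min τ (t k.castSucc)) := by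
      intro k
      rw [setIntegral_congr_fun measurableSet_Ioc
        (fun z hz => hf_eq k z (hIocsub k hz))]
      by_cases hka : t k.castSucc ≤ τ
      · rw [hIoc k _ (le_min hka (htkk k)) (min_le_right _ _), min_eq_right hka]
      · push_neg at hka
        have hm : min τ (t k.succ) = τ := min_eq_left (hka.le.trans (htkk k))
        rw [Set.Ioc_eq_empty (by rw [hm]; exact fun h => absurd h (not_lt.2 hka.le)),
          hm, min_eq_left hka.le]
        simp
    rw [Finset.sum_congr rfl fun k _ => hterm k]
    have hconv : ∀ k : Fin N, Φ (min τ (t k.succ)) - Φ (min τ (t k.castSucc))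
        = Φ (min τ (tN (k.val+1))) - Φ (min τ (tN k.val)) := by
      intro k; rw [htN_cast, htN_succ]
    rw [Finset.sum_congr rfl fun k _ => hconv k,
      Fin.sum_univ_eq_sum_range (fun j => Φ (min τ (tN (j+1))) - Φ (min τ (tN j))) N,
      Finset.sum_range_sub (f := fun j => Φ (min τ (tN j))) N,
      htN0, htNlast, min_eq_left hT, min_eq_right h0, hΦ0, sub_zero]
  -- the glued pair is a global Skorohod solution for wt
  have hGlob : SkorohodSol D 0 T' wt y Φ := by
    refine ⟨hycont, ?_, hΦcont, hVfin, hΦ0, heqn, ?_⟩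
    · intro τ hτ
      obtain ⟨k, h1, h2⟩ := hcover τ hτ.1 hτ.2
      exact (hSol k).xi_mem τ ⟨h1, h2⟩
    · refine ⟨nv, μ, hnvmeas', ?_, ?_, ?_⟩
      · intro s hs hfr
        by_cases h0 : s = 0
        · subst h0
          have hk0c : t (⟨0, hN⟩ : Fin N).castSucc = 0 := ht0
          rw [hnvdef]
          simp only [if_pos rfl]
          exact hcone ⟨0, hN⟩ 0 ⟨le_of_eq hk0c, hk0c ▸ htkk ⟨0, hN⟩⟩ hfr
        · obtain ⟨k, h1, h2⟩ := hcoverIoc s (lt_of_le_of_ne hs.1 (Ne.symm h0)) hs.2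
          rw [hnv_on k s h1 h2]
          exact hcone k s ⟨h1.le, h2⟩ hfr
      · intro u v h1 h2 h3
        exact hμspec' u v h1 h2 h3
      · intro τ hτ
        exact hglobala τ hτ.1 hτ.2
  -- the main variation estimate from (H1)
  have hest : ∀ s u : ℝ, 0 ≤ s → s ≤ u → u ≤ T' →
      totalVar Φ s u ≤ C_D * supNorm wt s u := by
    intro s u h1 h2 h3
    exact (hmain 0 T' le_rfl hT'.le le_rfl wt hwtcont (hwt0 ▸ hy₀)).2.2 y Φ hGlob s u h1 h2 h3
  -- bound the increments of S via Abel summation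
  set V := totalVar Φ 0 T' with hVdef
  have hVnonneg : 0 ≤ V := ENNReal.toReal_nonneg
  have hsumvar : ∑ j ∈ Finset.range N, ‖Φ (tN (j+1)) - Φ (tN j)‖ ≤ V := by
    have hle := eVariationOn.sum_le (f := Φ) (n := N) htN_mono
      (fun i => (Set.mem_Icc.2 ⟨htN_nonneg i, htN_leT i⟩ : tN i ∈ Icc (0:ℝ) T'))
    have h1 : ENNReal.ofReal (∑ j ∈ Finset.range N, ‖Φ (tN (j+1)) - Φ (tN j)‖)
        ≤ eVariationOn Φ (Icc 0 T') := by
      rw [ENNReal.ofReal_sum_of_nonneg (fun j _ => norm_nonneg _)]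
      refine le_trans (le_of_eq (Finset.sum_congr rfl fun j _ => ?_)) hle
      rw [edist_dist, dist_eq_norm]
    have h2 := ENNReal.toReal_mono hVfin h1
    rwa [ENNReal.toReal_ofReal (Finset.sum_nonneg fun j _ => norm_nonneg _)] at h2
  have hSbound : ∀ s u q1 q2 : ℝ, 0 ≤ s → s ≤ q1 → q1 ≤ q2 → q2 ≤ u → u ≤ T' →
      ‖S q2 - S q1‖ ≤ 2 * V * supNorm x s u := by
    intro s u q1 q2 hs hq1 hq12 hq2 hu
    have hxbdd := SkoAux.supNorm_bddAbove' (hxc.mono (Icc_subset_Icc hs hu))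
    have hxnn : 0 ≤ supNorm x s u := SkoAux.supNorm_nonneg' x s u
    set A : ℕ → EuclideanSpace ℝ (Fin n) :=
      fun j => x (min q2 (tN j)) - x (min q1 (tN j)) with hAdef
    set B : ℕ → EuclideanSpace ℝ (Fin d) := fun j => Φ (tN j) with hBdef
    have hSd : S q2 - S q1 = ∑ j ∈ Finset.range N, outerTensor (B j) (A (j+1) - A j) := by
      rw [hSdef]
      simp only
      rw [← Finset.sum_sub_distrib]
      refine Finset.sum_congr rfl fun j _ => ?_
      rw [← SkoAux.outerTensor_sub_right]
      congr 1
      rw [hAdef]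
      exact sub_sub_sub_comm _ _ _ _
    rw [hSd, SkoAux.abel_sum outerTensor SkoAux.outerTensor_sub_left
      SkoAux.outerTensor_add_right SkoAux.outerTensor_zero_right B A N]
    have hB0 : B 0 = 0 := by rw [hBdef]; simp only; rw [htN0, hΦ0]
    rw [hB0, SkoAux.outerTensor_zero_left, zero_add]
    have hxinc : ∀ a b : ℝ, s ≤ a → a ≤ b → b ≤ u → ‖x b - x a‖ ≤ supNorm x s u :=
      fun a b ha hab hb => SkoAux.norm_sub_le_supNorm' hxbdd ha hab hb
    have hAbound : ∀ j : ℕ, ‖A N - A (j+1)‖ ≤ 2 * supNorm x s u := by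
      intro j
      have hAN : A N = x q2 - x q1 := by
        rw [hAdef]
        simp only
        rw [htNlast, min_eq_left (hq2.trans hu), min_eq_left (hq12.trans (hq2.trans hu))]
      have hAj : ‖A (j+1)‖ ≤ supNorm x s u := by
        rw [hAdef]
        simp only
        rcases le_or_gt (tN (j+1)) q1 with hc | hc
        · rw [min_eq_right (hc.trans hq12), min_eq_right hc, sub_self, norm_zero]
          exact hxnn
        · rw [min_eq_left hc.le]
          exact hxinc q1 (min q2 (tN (j+1))) hq1 (le_min hq12 hc.le)
            ((min_le_left _ _).trans hq2)
      calc ‖A N - A (j+1)‖ ≤ ‖A N‖ + ‖A (j+1)‖ := norm_sub_le _ _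
      _ ≤ supNorm x s u + supNorm x s u := by
          rw [hAN]
          exact add_le_add (hxinc q1 q2 hq1 hq12 hq2) hAj
      _ = 2 * supNorm x s u := by ring
    calc ‖∑ j ∈ Finset.range N, outerTensor (B (j+1) - B j) (A N - A (j+1))‖
        ≤ ∑ j ∈ Finset.range N, ‖outerTensor (B (j+1) - B j) (A N - A (j+1))‖ :=
          norm_sum_le _ _
    _ ≤ ∑ j ∈ Finset.range N, ‖B (j+1) - B j‖ * (2 * supNorm x s u) := by
        refine Finset.sum_le_sum fun j _ => ?_
        exact (SkoAux.norm_outerTensor_le _ _).trans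
          (mul_le_mul_of_nonneg_left (hAbound j) (norm_nonneg _))
    _ = (∑ j ∈ Finset.range N, ‖B (j+1) - B j‖) * (2 * supNorm x s u) :=
        (Finset.sum_mul _ _ _).symm
    _ ≤ V * (2 * supNorm x s u) :=
        mul_le_mul_of_nonneg_right hsumvar (by positivity)
    _ = 2 * V * supNorm x s u := by ring
  -- supNorm bound for wt
  have hwtbound : ∀ s u : ℝ, 0 ≤ s → s ≤ u → u ≤ T' →
      supNorm wt s u ≤ supNorm η s u + ‖F‖ * (2 * V * supNorm x s u) := by
    intro s u hs hsu hu
    have hηbdd := SkoAux.supNorm_bddAbove' (hη.mono (Icc_subset_Icc hs hu))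
    have hηnn : 0 ≤ supNorm η s u := SkoAux.supNorm_nonneg' η s u
    have hxnn : 0 ≤ supNorm x s u := SkoAux.supNorm_nonneg' x s u
    apply SkoAux.supNorm_le' (by positivity)
    intro a b h1 h2 h3
    have hdiff : wt b - wt a = (η b - η a) + F (S b - S a) := by
      rw [hwtdef]
      simp only
      rw [map_sub]
      abel
    rw [hdiff]
    calc ‖(η b - η a) + F (S b - S a)‖ ≤ ‖η b - η a‖ + ‖F (S b - S a)‖ := norm_add_le _ _
    _ ≤ supNorm η s u + ‖F‖ * (2 * V * supNorm x s u) := by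
        refine add_le_add (SkoAux.norm_sub_le_supNorm' hηbdd h1 h2 h3) ?_
        exact (F.le_opNorm _).trans (mul_le_mul_of_nonneg_left
          (hSbound s u a b hs h1 h2 h3 hu) (norm_nonneg F))
  -- key inequality
  have hkey : ∀ s u : ℝ, 0 ≤ s → s ≤ u → u ≤ T' →
      totalVar Φ s u ≤ C_D * supNorm η s u + C_D * ‖F‖ * (2 * V * supNorm x s u) := by
    intro s u h1 h2 h3
    calc totalVar Φ s u ≤ C_D * supNorm wt s u := hest s u h1 h2 h3
    _ ≤ C_D * (supNorm η s u + ‖F‖ * (2 * V * supNorm x s u)) :=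
        mul_le_mul_of_nonneg_left (hwtbound s u h1 h2 h3) hCD.le
    _ = C_D * supNorm η s u + C_D * ‖F‖ * (2 * V * supNorm x s u) := by ring
  -- numerics
  have hFpos : (0:ℝ) < ‖F‖ := norm_pos_iff.2 hF
  have hxTnn : 0 ≤ supNorm x 0 T' := SkoAux.supNorm_nonneg' x 0 T'
  have hηTnn : 0 ≤ supNorm η 0 T' := SkoAux.supNorm_nonneg' η 0 T'
  have hxsmall : C_D * ‖F‖ * supNorm x 0 T' ≤ 1/10 := by
    have h := mul_le_mul_of_nonneg_left hsmall (mul_pos hCD hFpos).le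
    calc C_D * ‖F‖ * supNorm x 0 T' ≤ C_D * ‖F‖ * (1 / (10 * C_D * ‖F‖)) := h
    _ = 1/10 := by field_simp
  have hV14 : V ≤ 5/4 * C_D * supNorm η 0 T' := by
    have h := hkey 0 T' le_rfl hT'.le le_rfl
    rw [← hVdef] at h
    nlinarith [mul_le_mul_of_nonneg_right hxsmall hVnonneg]
  constructor
  · nlinarith [hV14, mul_nonneg hCD.le hηTnn]
  · intro s u h1 h2 h3
    have h := hkey s u h1 h2 h3
    have hxnn : 0 ≤ supNorm x s u := SkoAux.supNorm_nonneg' x s u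
    have hηnn : 0 ≤ supNorm η s u := SkoAux.supNorm_nonneg' η s u
    have hprod : 2 * C_D * ‖F‖ * supNorm x s u * V
        ≤ 2 * C_D * ‖F‖ * supNorm x s u * (5/4 * C_D * supNorm η 0 T') := by
      apply mul_le_mul_of_nonneg_left hV14
      positivity
    nlinarith [mul_nonneg (mul_nonneg (mul_nonneg (sq_nonneg C_D) hFpos.le) hηTnn) hxnn,
      mul_nonneg hCD.le hηnn]

end
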